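/- Let k ≥ 2 and let f : (0,∞) → (0,∞) be a monotone decreasing function that is strictly convex on (0,∞) and satisfies limsup_{x→∞} f(x)^{1/x} < 1/(2k-1)^k. Then there exists a convex neighborhood U of ℒ* = (1/k,…,1/k) in Δ_k such that 0 < P_f(ℒ) < C_f(ℒ) < ∞ for all ℒ ∈ U and both C_f and P_f are strictly convex functions on U; in particular neither C_f nor P_f is constant on U. -/

import Mathlib

open Filter Topology
open scoped ENNReal

namespace McShane

/-- The ℒ-weighted length of the freely reduced form of `g`: the sum of `L i`
over all occurrences of `aᵢ^{±1}` in the reduced word of `g`. -/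
noncomputable def wlen {k : ℕ} (L : Fin k → ℝ) (g : FreeGroup (Fin k)) : ℝ :=
  ((FreeGroup.toWord g).map fun x => L x.1).sum

/-- The hyperbolic length of a conjugacy class: the infimum of the ℒ-weighted
lengths of its representatives. For positive edge lengths this equals
`∑ mᵢ·L i` where `mᵢ` counts occurrences of `aᵢ^{±1}` in the cyclically reduced form. -/
noncomputable def hlen {k : ℕ} (L : Fin k → ℝ) (c : ConjClasses (FreeGroup (Fin k))) : ℝ :=
  sInf (wlen L '' c.carrier)

/-- The open simplex `Δ_k` of volume-one metric structures on the wedge of `k` circles. -/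
def simplex (k : ℕ) : Set (Fin k → ℝ) :=
  {L | (∀ i, 0 < L i) ∧ ∑ i, L i = 1}

/-- The barycentric point `ℒ* = (1/k, …, 1/k)`. -/
noncomputable def Lstar (k : ℕ) : Fin k → ℝ := fun _ => 1 / k

/-- `g` is primitive iff it belongs to some free basis of the free group,
equivalently it is the image of a basis element under an automorphism. -/
def IsPrimitive {k : ℕ} (g : FreeGroup (Fin k)) : Prop :=
  ∃ (e : FreeGroup (Fin k) ≃* FreeGroup (Fin k)) (i : Fin k), e (FreeGroup.of i) = g

/-- `C_f(ℒ) = ∑_{w ∈ 𝒞_k} f(ℓ_ℒ(w))`, the sum over all nontrivial conjugacy classes. -/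
noncomputable def Cf {k : ℕ} (f : ℝ → ℝ) (L : Fin k → ℝ) : ℝ≥0∞ :=
  ∑' c : {c : ConjClasses (FreeGroup (Fin k)) // c ≠ 1}, ENNReal.ofReal (f (hlen L c.1))

/-- `P_f(ℒ) = ∑_{w ∈ 𝒫_k} f(ℓ_ℒ(w))`, the sum over conjugacy classes of primitive elements. -/
noncomputable def Pf {k : ℕ} (f : ℝ → ℝ) (L : Fin k → ℝ) : ℝ≥0∞ :=
  ∑' c : {c : ConjClasses (FreeGroup (Fin k)) // ∃ g, IsPrimitive g ∧ ConjClasses.mk g = c},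
    ENNReal.ofReal (f (hlen L c.1))

variable {k : ℕ}

lemma wlen_nonneg {L : Fin k → ℝ} (hL : ∀ i, 0 ≤ L i) (g : FreeGroup (Fin k)) : 0 ≤ wlen L g := by
  apply List.sum_nonneg
  intro x hx
  obtain ⟨y, -, rfl⟩ := List.mem_map.mp hx
  exact hL _

lemma wlen_smul_add (a b : ℝ) (x y : Fin k → ℝ) (g : FreeGroup (Fin k)) :
    wlen (a • x + b • y) g = a * wlen x g + b * wlen y g := by
  unfold wlen
  induction FreeGroup.toWord g with
  | nil => simp
  | cons h t ih =>
    simp only [List.map_cons, List.sum_cons, ih]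
    simp only [Pi.add_apply, Pi.smul_apply, smul_eq_mul]
    ring

lemma theta_len_le_wlen {θ : ℝ} (hθ : 0 ≤ θ) {L : Fin k → ℝ} (hL : ∀ i, θ ≤ L i)
    (g : FreeGroup (Fin k)) : θ * (FreeGroup.toWord g).length ≤ wlen L g := by
  unfold wlen
  induction FreeGroup.toWord g with
  | nil => simp
  | cons h t ih =>
    simp only [List.map_cons, List.sum_cons, List.length_cons]
    push_cast
    have := hL h.1
    linarith

lemma hlen_le {L : Fin k → ℝ} (hL : ∀ i, 0 ≤ L i) {g : FreeGroup (Fin k)}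
    {c : ConjClasses (FreeGroup (Fin k))} (hg : ConjClasses.mk g = c) : hlen L c ≤ wlen L g := by
  refine csInf_le ⟨0, ?_⟩ ⟨g, ConjClasses.mem_carrier_iff_mk_eq.mpr hg, rfl⟩
  rintro r ⟨g', -, rfl⟩
  exact wlen_nonneg hL g'

lemma le_hlen {L : Fin k → ℝ} {r : ℝ} {c : ConjClasses (FreeGroup (Fin k))}
    (h : ∀ g, ConjClasses.mk g = c → r ≤ wlen L g) : r ≤ hlen L c := by
  apply le_csInf
  · obtain ⟨g, hg⟩ := ConjClasses.exists_rep c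
    exact ⟨wlen L g, ⟨g, ConjClasses.mem_carrier_iff_mk_eq.mpr hg, rfl⟩⟩
  · rintro b ⟨g, hg, rfl⟩
    exact h g (ConjClasses.mem_carrier_iff_mk_eq.mp hg)

/-- minimal word length over the conjugacy class -/
noncomputable def minLen (c : ConjClasses (FreeGroup (Fin k))) : ℕ :=
  sInf {n | ∃ g, ConjClasses.mk g = c ∧ (FreeGroup.toWord g).length = n}

lemma minLen_spec (c : ConjClasses (FreeGroup (Fin k))) :
    ∃ g, ConjClasses.mk g = c ∧ (FreeGroup.toWord g).length = minLen c := by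
  obtain ⟨g, hg⟩ := ConjClasses.exists_rep c
  have : minLen c ∈ {n | ∃ g, ConjClasses.mk g = c ∧ (FreeGroup.toWord g).length = n} :=
    Nat.sInf_mem ⟨_, g, hg, rfl⟩
  exact this

lemma minLen_le {g : FreeGroup (Fin k)} {c : ConjClasses (FreeGroup (Fin k))}
    (h : ConjClasses.mk g = c) : minLen c ≤ (FreeGroup.toWord g).length :=
  Nat.sInf_le ⟨g, h, rfl⟩

lemma mk_ne_one {g : FreeGroup (Fin k)} {c : ConjClasses (FreeGroup (Fin k))}
    (h : ConjClasses.mk g = c) (hc : c ≠ 1) : g ≠ 1 := by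
  rintro rfl
  exact hc (h ▸ (ConjClasses.one_eq_mk_one).symm)

lemma one_le_minLen {c : ConjClasses (FreeGroup (Fin k))} (hc : c ≠ 1) : 1 ≤ minLen c := by
  obtain ⟨g, hg, hlen⟩ := minLen_spec c
  have hg1 : g ≠ 1 := mk_ne_one hg hc
  have : FreeGroup.toWord g ≠ [] := fun h => hg1 (FreeGroup.toWord_eq_nil_iff.mp h)
  rw [← hlen]
  exact List.length_pos_iff.mpr this

lemma theta_minLen_le_hlen {θ : ℝ} (hθ : 0 ≤ θ) {L : Fin k → ℝ} (hL : ∀ i, θ ≤ L i)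
    (c : ConjClasses (FreeGroup (Fin k))) : θ * minLen c ≤ hlen L c := by
  apply le_hlen
  intro g hg
  refine le_trans ?_ (theta_len_le_wlen hθ hL g)
  exact mul_le_mul_of_nonneg_left (Nat.cast_le.mpr (minLen_le hg)) hθ

lemma hlen_pos {θ : ℝ} (hθ : 0 < θ) {L : Fin k → ℝ} (hL : ∀ i, θ ≤ L i)
    {c : ConjClasses (FreeGroup (Fin k))} (hc : c ≠ 1) : 0 < hlen L c := by
  have h1 : (1 : ℝ) ≤ (minLen c : ℝ) := by exact_mod_cast one_le_minLen hc
  have := theta_minLen_le_hlen hθ.le hL c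
  nlinarith

lemma hlen_concave {x y : Fin k → ℝ} (hx : ∀ i, 0 ≤ x i) (hy : ∀ i, 0 ≤ y i) {a b : ℝ}
    (ha : 0 ≤ a) (hb : 0 ≤ b) (c : ConjClasses (FreeGroup (Fin k))) :
    a * hlen x c + b * hlen y c ≤ hlen (a • x + b • y) c := by
  apply le_hlen
  intro g hg
  rw [wlen_smul_add]
  exact add_le_add (mul_le_mul_of_nonneg_left (hlen_le hx hg) ha)
    (mul_le_mul_of_nonneg_left (hlen_le hy hg) hb)

lemma toAdd_lift_le_wlen {L : Fin k → ℝ} (hL : ∀ i, 0 ≤ L i) (g : FreeGroup (Fin k)) :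
    Multiplicative.toAdd ((FreeGroup.lift fun j => Multiplicative.ofAdd (L j)) g) ≤ wlen L g := by
  conv_lhs => rw [← FreeGroup.mk_toWord (x := g)]
  rw [FreeGroup.lift_mk]
  unfold wlen
  induction FreeGroup.toWord g with
  | nil => simp
  | cons h t ih =>
    simp only [List.map_cons, List.prod_cons, List.sum_cons, toAdd_mul]
    have := hL h.1
    cases hb : h.2 <;> simp only [cond_true, cond_false, toAdd_inv, toAdd_ofAdd] <;> linarith

lemma hlen_mk_of {L : Fin k → ℝ} (hL : ∀ i, 0 ≤ L i) (i : Fin k) :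
    hlen L (ConjClasses.mk (FreeGroup.of i)) = L i := by
  apply le_antisymm
  · refine le_trans (hlen_le hL rfl) ?_
    simp [wlen, FreeGroup.toWord_of]
  · apply le_hlen
    intro g hg
    have hconj : IsConj g (FreeGroup.of i) := ConjClasses.mk_eq_mk_iff_isConj.mp hg
    obtain ⟨u, hu⟩ := isConj_iff.mp hconj
    set φ := FreeGroup.lift fun j => Multiplicative.ofAdd (L j) with hφ
    have h1 : φ (FreeGroup.of i) = Multiplicative.ofAdd (L i) := FreeGroup.lift_apply_of
    have h2 : φ (u * g * u⁻¹) = φ g := by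
      simp only [map_mul, map_inv]
      rw [mul_comm (φ u) (φ g), mul_assoc]
      simp
    have h3 : φ g = Multiplicative.ofAdd (L i) := by
      rw [← h1, ← hu]
      exact h2.symm
    have := toAdd_lift_le_wlen hL g
    rw [h3] at this
    simpa using this

/-- no-cancellation relation on letters -/
def RR : (Fin k × Bool) → (Fin k × Bool) → Prop := fun a b => b ≠ (a.1, !a.2)

instance : DecidableRel (RR (k := k)) := fun _ _ => instDecidableNot

instance (l : List (Fin k × Bool)) : Decidable (List.Chain' RR l) :=
  inferInstanceAs (Decidable (List.IsChain RR l))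

lemma chain'_of_noRed : ∀ (w : List (Fin k × Bool)),
    (∀ (l₁ l₂ : List (Fin k × Bool)) (x : Fin k) (b : Bool), w ≠ l₁ ++ (x, b) :: (x, !b) :: l₂) →
    List.Chain' RR w
  | [], _ => List.isChain_nil
  | [_], _ => List.isChain_singleton _
  | a :: b :: t, h => by
    unfold List.Chain'
    rw [List.isChain_cons_cons]
    constructor
    · intro heq
      exact h [] t a.1 a.2 (by rw [heq]; simp)
    · refine chain'_of_noRed (b :: t) fun l₁ l₂ x bb hw => ?_
      exact h (a :: l₁) l₂ x bb (by rw [List.cons_append, ← hw])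

lemma chain'_toWord (g : FreeGroup (Fin k)) : List.Chain' RR (FreeGroup.toWord g) := by
  apply chain'_of_noRed
  intro l₁ l₂ x b hw
  have : FreeGroup.reduce (FreeGroup.toWord g) = l₁ ++ (x, b) :: (x, !b) :: l₂ := by
    rw [FreeGroup.reduce_toWord]; exact hw
  exact FreeGroup.reduce.not this

/-- reduced words of length `n+1` -/
def Fib (k n : ℕ) := {v : List.Vector (Fin k × Bool) (n + 1) // List.Chain' RR v.1}

instance (n : ℕ) : Fintype (Fib k n) := Subtype.fintype _

lemma card_ne_letter (z : Fin k × Bool) :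
    Fintype.card {x : Fin k × Bool // ¬x = z} = 2 * k - 1 := by
  rw [Fintype.card_subtype_compl, Fintype.card_subtype_eq]
  simp [Fintype.card_prod, mul_comm]

noncomputable def encodeLetter (z : Fin k × Bool) : {x : Fin k × Bool // ¬x = z} ≃ Fin (2 * k - 1) :=
  Fintype.equivFinOfCardEq (card_ne_letter z)

variable {n : ℕ}

lemma fib_list_ne_nil (p : Fib k (n + 1)) : p.1.1 ≠ [] := by
  have := p.1.2
  intro h
  rw [h] at this
  simp at this

lemma fib_tail_ne_nil (p : Fib k (n + 1)) : p.1.1.tail ≠ [] := by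
  have := p.1.2
  have ht : p.1.1.tail.length = n + 1 := by rw [List.length_tail, this]; omega
  intro h
  rw [h] at ht
  simp at ht

lemma fibStep_aux (p : Fib k (n + 1)) :
    ¬ p.1.1.head (fib_list_ne_nil p) =
      ((p.1.1.tail.head (fib_tail_ne_nil p)).1, !(p.1.1.tail.head (fib_tail_ne_nil p)).2) := by
  set l := p.1.1 with hl
  have hc : List.Chain' RR l := p.2
  have hcons : l.head (fib_list_ne_nil p) :: l.tail = l := List.cons_head_tail _
  rw [← hcons] at hc
  have hRR : RR (l.head (fib_list_ne_nil p)) (l.tail.head (fib_tail_ne_nil p)) := by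
    refine (List.isChain_cons.mp hc).1 _ ?_
    rw [List.head?_eq_head (fib_tail_ne_nil p)]
    rfl
  intro heq
  apply hRR
  rw [heq]
  simp
  rfl

lemma fib_tail_length (p : Fib k (n + 1)) : p.1.1.tail.length = n + 1 := by
  rw [List.length_tail, p.1.2]; omega

noncomputable def fibStep (p : Fib k (n + 1)) : Fin (2 * k - 1) × Fib k n :=
  (encodeLetter ((p.1.1.tail.head (fib_tail_ne_nil p)).1,
      !(p.1.1.tail.head (fib_tail_ne_nil p)).2) ⟨p.1.1.head (fib_list_ne_nil p), fibStep_aux p⟩,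
   ⟨⟨p.1.1.tail, fib_tail_length p⟩, p.2.tail⟩)

lemma fib_snd_ne_nil (q : Fin (2 * k - 1) × Fib k n) : q.2.1.1 ≠ [] := by
  have := q.2.1.2
  intro h
  rw [h] at this
  simp at this

noncomputable def fibRec (q : Fin (2 * k - 1) × Fib k n) : List (Fin k × Bool) :=
  ((encodeLetter ((q.2.1.1.head (fib_snd_ne_nil q)).1,
      !(q.2.1.1.head (fib_snd_ne_nil q)).2)).symm q.1).1 :: q.2.1.1

lemma fibRec_fibStep (p : Fib k (n + 1)) : fibRec (fibStep p) = p.1.1 := by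
  unfold fibRec fibStep
  simp only [Equiv.symm_apply_apply]
  exact List.cons_head_tail _

lemma fibStep_injective : Function.Injective (fibStep (k := k) (n := n)) := by
  intro p q hpq
  have : p.1.1 = q.1.1 := by rw [← fibRec_fibStep p, ← fibRec_fibStep q, hpq]
  exact Subtype.ext (Subtype.ext this)

lemma card_fib_succ_le : Fintype.card (Fib k (n + 1)) ≤ (2 * k - 1) * Fintype.card (Fib k n) := by
  calc Fintype.card (Fib k (n + 1)) ≤ Fintype.card (Fin (2 * k - 1) × Fib k n) :=
        Fintype.card_le_of_injective _ fibStep_injective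
    _ = (2 * k - 1) * Fintype.card (Fib k n) := by rw [Fintype.card_prod, Fintype.card_fin]

lemma card_fib_le (n : ℕ) : Fintype.card (Fib k n) ≤ 2 * k * (2 * k - 1) ^ n := by
  induction n with
  | zero =>
    calc Fintype.card (Fib k 0) ≤ Fintype.card (List.Vector (Fin k × Bool) 1) :=
          Fintype.card_subtype_le _
      _ = 2 * k * (2 * k - 1) ^ 0 := by
          rw [card_vector]
          simp [Fintype.card_prod, mul_comm]
  | succ n ih =>
    calc Fintype.card (Fib k (n + 1)) ≤ (2 * k - 1) * Fintype.card (Fib k n) := card_fib_succ_le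
      _ ≤ (2 * k - 1) * (2 * k * (2 * k - 1) ^ n) := Nat.mul_le_mul_left _ ih
      _ = 2 * k * (2 * k - 1) ^ (n + 1) := by ring

section Summability

/-- encode a nontrivial element of the free group as a reduced word of length n+1 -/
noncomputable def encodeFG (g : {g : FreeGroup (Fin k) // g ≠ 1}) : Σ n : ℕ, Fib k n :=
  ⟨(FreeGroup.toWord g.1).length - 1,
    ⟨⟨FreeGroup.toWord g.1, by
      have : FreeGroup.toWord g.1 ≠ [] := fun h => g.2 (FreeGroup.toWord_eq_nil_iff.mp h)
      have := List.length_pos_iff.mpr this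
      omega⟩, chain'_toWord g.1⟩⟩

lemma encodeFG_injective : Function.Injective (encodeFG (k := k)) := by
  intro g g' h
  have h1 : (encodeFG g).2.1.1 = (encodeFG g').2.1.1 := by rw [h]
  exact Subtype.ext (FreeGroup.toWord_injective h1)

lemma encodeFG_fst (g : {g : FreeGroup (Fin k) // g ≠ 1}) :
    ((encodeFG g).1 : ℝ) + 1 = (FreeGroup.toWord g.1).length := by
  have : FreeGroup.toWord g.1 ≠ [] := fun h => g.2 (FreeGroup.toWord_eq_nil_iff.mp h)
  have h1 := List.length_pos_iff.mpr this
  show (((FreeGroup.toWord g.1).length - 1 : ℕ) : ℝ) + 1 = _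
  have : (FreeGroup.toWord g.1).length - 1 + 1 = (FreeGroup.toWord g.1).length := by omega
  exact_mod_cast congrArg (Nat.cast (R := ℝ)) this

/-- The central summability estimate. -/
lemma summable_over_FG (hk : 2 ≤ k) (f : ℝ → ℝ) (hf_pos : ∀ x > (0 : ℝ), 0 < f x)
    {θ σ X : ℝ} (hθ : 0 < θ) (hσ0 : 0 < σ)
    (hfσ : ∀ x : ℝ, X ≤ x → f x ≤ σ ^ x)
    (hr : (2 * (k : ℝ) - 1) * σ ^ θ < 1) :
    Summable (fun g : {g : FreeGroup (Fin k) // g ≠ 1} =>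
      f (θ * (FreeGroup.toWord g.1).length)) := by
  have hcast : ((2 * k - 1 : ℕ) : ℝ) = 2 * (k : ℝ) - 1 := by
    have : 1 ≤ 2 * k := by omega
    push_cast [this]
    ring
  -- the sigma-type function
  set F : (Σ n : ℕ, Fib k n) → ℝ := fun p => f (θ * ((p.1 : ℝ) + 1)) with hF
  have hFpos : ∀ p, 0 < F p := by
    intro p
    apply hf_pos
    positivity
  have hSF : Summable F := by
    rw [summable_sigma_of_nonneg (fun p => (hFpos p).le)]
    constructor
    · intro n
      exact (hasSum_fintype _).summable
    · -- ∑' over fiber = card * value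
      have hfib : ∀ n : ℕ, (∑' _ : Fib k n, f (θ * ((n : ℝ) + 1)))
          = (Fintype.card (Fib k n) : ℝ) * f (θ * ((n : ℝ) + 1)) := by
        intro n
        rw [tsum_fintype]
        rw [Finset.sum_const, Finset.card_univ, nsmul_eq_mul]
      simp only [hF, hfib]
      -- geometric comparison, after a shift
      set r : ℝ := (2 * (k : ℝ) - 1) * σ ^ θ with hrdef
      have hσθ : (0 : ℝ) < σ ^ θ := Real.rpow_pos_of_pos hσ0 θ
      have hk1 : (1 : ℝ) ≤ (k : ℝ) := by exact_mod_cast Nat.one_le_of_lt hk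
      have h2k1 : (0 : ℝ) ≤ 2 * (k : ℝ) - 1 := by linarith
      have hr0 : 0 ≤ r := mul_nonneg h2k1 hσθ.le
      set N : ℕ := ⌈X / θ⌉₊ with hN
      rw [← summable_nat_add_iff N]
      have hbound : ∀ m : ℕ, (Fintype.card (Fib k (m + N)) : ℝ) * f (θ * ((m + N : ℕ) + 1))
          ≤ (2 * (k : ℝ) * σ ^ θ * r ^ N) * r ^ m := by
        intro m
        have hx : X ≤ θ * ((m + N : ℕ) + 1) := by
          have h1 : X / θ ≤ (N : ℝ) := Nat.le_ceil _
          have h2 : (N : ℝ) ≤ ((m + N : ℕ) : ℝ) + 1 := by push_cast; linarith [Nat.cast_nonneg (α := ℝ) m]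
          calc X = θ * (X / θ) := by field_simp
            _ ≤ θ * ((m + N : ℕ) + 1) := by
                apply mul_le_mul_of_nonneg_left _ hθ.le
                linarith
        have hfle : f (θ * ((m + N : ℕ) + 1)) ≤ (σ ^ θ) ^ (m + N + 1) := by
          refine le_trans (hfσ _ hx) ?_
          rw [show θ * ((m + N : ℕ) + 1) = θ * ((m + N + 1 : ℕ) : ℝ) by push_cast; ring]
          rw [Real.rpow_mul hσ0.le, Real.rpow_natCast]
        have hcard : (Fintype.card (Fib k (m + N)) : ℝ) ≤ 2 * (k : ℝ) * (2 * (k : ℝ) - 1) ^ (m + N) := by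
          have := card_fib_le (k := k) (m + N)
          have h2 : ((2 * k * (2 * k - 1) ^ (m + N) : ℕ) : ℝ) = 2 * (k : ℝ) * (2 * (k : ℝ) - 1) ^ (m + N) := by
            push_cast [hcast]
            ring
          calc (Fintype.card (Fib k (m + N)) : ℝ) ≤ ((2 * k * (2 * k - 1) ^ (m + N) : ℕ) : ℝ) := by
                exact_mod_cast this
            _ = _ := h2
        have hfnn : 0 < f (θ * ((m + N : ℕ) + 1)) := by
          apply hf_pos
          positivity
        calc (Fintype.card (Fib k (m + N)) : ℝ) * f (θ * ((m + N : ℕ) + 1))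
            ≤ (2 * (k : ℝ) * (2 * (k : ℝ) - 1) ^ (m + N)) * ((σ ^ θ) ^ (m + N + 1)) := by
              apply mul_le_mul hcard hfle hfnn.le
              exact mul_nonneg (by positivity) (pow_nonneg h2k1 _)
          _ = (2 * (k : ℝ) * σ ^ θ * r ^ N) * r ^ m := by
              rw [hrdef, mul_pow, mul_pow]
              rw [pow_add, pow_add, pow_succ]
              ring
        
      apply Summable.of_nonneg_of_le _ hbound
      · exact (Summable.mul_left _ (summable_geometric_of_lt_one hr0 hr))
      · intro m
        have : 0 < f (θ * ((m + N : ℕ) + 1)) := by apply hf_pos; positivity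
        positivity
  -- transfer along the injection
  have := hSF.comp_injective encodeFG_injective
  apply this.congr
  intro g
  show F (encodeFG g) = _
  rw [hF]
  simp only
  rw [encodeFG_fst g]

end Summability
lemma exists_sigma_theta (k : ℕ) (hk : 2 ≤ k) (f : ℝ → ℝ)
    (hf_pos : ∀ x > (0 : ℝ), 0 < f x)
    (hf_anti : StrictAntiOn f (Set.Ioi 0))
    (hf_limsup : limsup (fun x : ℝ => f x ^ (1 / x)) atTop < 1 / (2 * (k : ℝ) - 1) ^ k) :
    ∃ θ σ X : ℝ, 0 < θ ∧ θ < 1 / (k : ℝ) ∧ 0 < σ ∧ (∀ x : ℝ, X ≤ x → f x ≤ σ ^ x) ∧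
      (2 * (k : ℝ) - 1) * σ ^ θ < 1 := by
  have hk2 : (2 : ℝ) ≤ (k : ℝ) := by exact_mod_cast hk
  have hk0 : (0 : ℝ) < (k : ℝ) := by linarith
  have h2k1 : (0 : ℝ) < 2 * (k : ℝ) - 1 := by linarith
  set B : ℝ := 1 / (2 * (k : ℝ) - 1) ^ k with hBdef
  have hB : 0 < B := by positivity
  set M := limsup (fun x : ℝ => f x ^ (1 / x)) atTop with hM
  have hbd : ∀ᶠ x in (atTop : Filter ℝ), f x ^ (1 / x) ≤ max 1 (f 1) := by
    filter_upwards [eventually_ge_atTop (1 : ℝ)] with x hx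
    have hx0 : (0 : ℝ) < x := by linarith
    have hfx : 0 < f x := hf_pos x hx0
    by_cases hfx1 : f x ≤ 1
    · exact le_max_of_le_left (Real.rpow_le_one hfx.le hfx1 (by positivity))
    · refine le_max_of_le_right ?_
      calc f x ^ (1 / x) ≤ f x ^ (1 : ℝ) :=
            Real.rpow_le_rpow_of_exponent_le (le_of_not_ge hfx1) (by rw [div_le_one hx0]; linarith)
        _ = f x := Real.rpow_one _
        _ ≤ f 1 := by
            rcases eq_or_lt_of_le hx with h | h
            · rw [← h]
            · exact (hf_anti (Set.mem_Ioi.mpr one_pos) (Set.mem_Ioi.mpr hx0) h).le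
  have hbdd : IsBoundedUnder (· ≤ ·) (atTop : Filter ℝ) (fun x => f x ^ (1 / x)) :=
    isBoundedUnder_of_eventually_le hbd
  set σ : ℝ := max (B / 2) ((M + B) / 2) with hσdef
  have hMB : M < B := hf_limsup
  have hMσ : M < σ := lt_max_of_lt_right (by linarith)
  have hσB : σ < B := max_lt (by linarith) (by linarith)
  have hσ0 : 0 < σ := lt_of_lt_of_le (by linarith) (le_max_left _ _)
  have hev := eventually_lt_of_limsup_lt hMσ hbdd
  obtain ⟨X0, hX0⟩ := eventually_atTop.mp hev
  -- bound f x ≤ σ ^ x for x ≥ max X0 1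
  have hfσ : ∀ x : ℝ, max X0 1 ≤ x → f x ≤ σ ^ x := by
    intro x hx
    have hx1 : (1 : ℝ) ≤ x := le_trans (le_max_right _ _) hx
    have hx0 : (0 : ℝ) < x := by linarith
    have hfx : 0 < f x := hf_pos x hx0
    have hlt : f x ^ (1 / x) < σ := hX0 x (le_trans (le_max_left _ _) hx)
    have h2 : (f x ^ (1 / x)) ^ x < σ ^ x :=
      Real.rpow_lt_rpow (Real.rpow_nonneg hfx.le _) hlt hx0
    rw [← Real.rpow_mul hfx.le, one_div_mul_cancel hx0.ne', Real.rpow_one] at h2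
    exact h2.le
  -- the target inequality at θ = 1/k
  have htarget : (2 * (k : ℝ) - 1) * σ ^ ((1 : ℝ) / k) < 1 := by
    have hσB' : σ < ((2 * (k : ℝ) - 1) ^ k)⁻¹ := by rw [← one_div]; exact hσB
    have h1 : σ ^ ((1 : ℝ) / k) < (((2 * (k : ℝ) - 1) ^ k)⁻¹) ^ ((1 : ℝ) / k) :=
      Real.rpow_lt_rpow hσ0.le hσB' (by positivity)
    have h2 : (((2 * (k : ℝ) - 1) ^ k)⁻¹) ^ ((1 : ℝ) / k) = (2 * (k : ℝ) - 1)⁻¹ := by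
      rw [← Real.rpow_natCast (2 * (k : ℝ) - 1) k, ← Real.rpow_neg h2k1.le,
        ← Real.rpow_mul h2k1.le]
      rw [show -(k : ℝ) * (1 / k) = -1 by field_simp]
      exact Real.rpow_neg_one _
    rw [h2] at h1
    calc (2 * (k : ℝ) - 1) * σ ^ ((1 : ℝ) / k) < (2 * (k : ℝ) - 1) * (2 * (k : ℝ) - 1)⁻¹ :=
          mul_lt_mul_of_pos_left h1 h2k1
      _ = 1 := mul_inv_cancel₀ h2k1.ne'
  -- continuity in the exponent to get θ < 1/k
  have hcont : ContinuousAt (fun θ : ℝ => (2 * (k : ℝ) - 1) * σ ^ θ) (1 / (k : ℝ)) :=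
    (Real.continuousAt_const_rpow hσ0.ne').const_mul _
  have hev2 : ∀ᶠ θ in 𝓝 (1 / (k : ℝ)), (2 * (k : ℝ) - 1) * σ ^ θ < 1 :=
    hcont.eventually_lt_const htarget
  have hev3 : ∀ᶠ θ in 𝓝 (1 / (k : ℝ)), (0 : ℝ) < θ := eventually_gt_nhds (by positivity)
  have hcombined : ∀ᶠ θ in 𝓝[<] (1 / (k : ℝ)),
      ((2 * (k : ℝ) - 1) * σ ^ θ < 1 ∧ 0 < θ) ∧ θ < 1 / (k : ℝ) :=
    ((hev2.filter_mono nhdsWithin_le_nhds).and (hev3.filter_mono nhdsWithin_le_nhds)).and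
      eventually_mem_nhdsWithin
  obtain ⟨θ, ⟨hθr, hθ0⟩, hθk⟩ := hcombined.exists
  exact ⟨θ, σ, max X0 1, hθ0, hθk, hσ0, hfσ, hθr⟩

lemma isPrimitive_of (i : Fin k) : IsPrimitive (FreeGroup.of i) := ⟨MulEquiv.refl _, i, rfl⟩

lemma IsPrimitive.ne_one {g : FreeGroup (Fin k)} (h : IsPrimitive g) : g ≠ 1 := by
  obtain ⟨e, i, rfl⟩ := h
  intro h1
  exact FreeGroup.of_ne_one i (e.injective (by rw [h1, map_one]))

lemma mk_eq_one_iff {g : FreeGroup (Fin k)} : ConjClasses.mk g = 1 ↔ g = 1 := by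
  rw [ConjClasses.one_eq_mk_one, ConjClasses.mk_eq_mk_iff_isConj]
  exact isConj_one_left

lemma mk_of_ne_one (i : Fin k) : ConjClasses.mk (FreeGroup.of i) ≠ 1 := by
  rw [Ne, mk_eq_one_iff]
  exact FreeGroup.of_ne_one i

lemma sq_ne_one (i : Fin k) : FreeGroup.of i ^ 2 ≠ 1 := by
  intro h
  have := congrArg FreeGroup.toWord h
  rw [FreeGroup.toWord_of_pow, FreeGroup.toWord_one] at this
  simp at this

lemma mulsq_eq_one (y : Multiplicative (ZMod 2)) : y ^ 2 = 1 := by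
  have h : ∀ z : ZMod 2, z + z = 0 := by decide
  apply Multiplicative.toAdd.injective
  simp only [pow_two, toAdd_mul, toAdd_one]
  exact h _

lemma not_prim_conj_sq (i0 : Fin k) :
    ¬ ∃ g, IsPrimitive g ∧ ConjClasses.mk g = ConjClasses.mk (FreeGroup.of i0 ^ 2) := by
  rintro ⟨g, ⟨e, i, hei⟩, hmk⟩
  obtain ⟨u, hu⟩ := isConj_iff.mp (ConjClasses.mk_eq_mk_iff_isConj.mp hmk)
  set χ : FreeGroup (Fin k) →* Multiplicative (ZMod 2) :=
    (FreeGroup.lift fun j => Multiplicative.ofAdd (if j = i then (1 : ZMod 2) else 0)).comp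
      e.symm.toMonoidHom with hχ
  have hχg : χ g = Multiplicative.ofAdd (1 : ZMod 2) := by
    rw [hχ]
    simp only [MonoidHom.comp_apply, MulEquiv.coe_toMonoidHom]
    rw [← hei, MulEquiv.symm_apply_apply, FreeGroup.lift_apply_of, if_pos rfl]
  have hconj : χ (u * g * u⁻¹) = χ g := by
    simp only [map_mul, map_inv]
    rw [mul_comm (χ u) (χ g), mul_assoc]
    simp
  have hsq : χ (FreeGroup.of i0 ^ 2) = 1 := by
    rw [map_pow]
    exact mulsq_eq_one _
  rw [hu, hsq, hχg] at hconj
  have : (1 : ZMod 2) = 0 := by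
    have := congrArg Multiplicative.toAdd hconj
    simpa using this
  simp at this

lemma strictConvexOn_tsum (f : ℝ → ℝ)
    (hf_pos : ∀ x > (0 : ℝ), 0 < f x)
    (hf_anti : StrictAntiOn f (Set.Ioi 0))
    (hf_conv : StrictConvexOn ℝ (Set.Ioi 0) f)
    {θ : ℝ} (hθ0 : 0 < θ) {U : Set (Fin k → ℝ)} (hUc : Convex ℝ U)
    (hUθ : ∀ L ∈ U, ∀ i, θ ≤ L i)
    {ι : Type} (V : ι → ConjClasses (FreeGroup (Fin k))) (hV1 : ∀ j, V j ≠ 1)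
    (hfin : ∀ L ∈ U, (∑' j, ENNReal.ofReal (f (hlen L (V j)))) ≠ ⊤)
    (hgen : ∀ i : Fin k, ∃ j, V j = ConjClasses.mk (FreeGroup.of i)) :
    StrictConvexOn ℝ U (fun L => (∑' j, ENNReal.ofReal (f (hlen L (V j)))).toReal) := by
  refine ⟨hUc, ?_⟩
  intro x hx y hy hxy a b ha hb hab
  have hmidU : a • x + b • y ∈ U := hUc hx hy ha.le hb.le hab
  set m : Fin k → ℝ := a • x + b • y with hm
  have hx0 : ∀ i, 0 ≤ x i := fun i => le_trans hθ0.le (hUθ x hx i)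
  have hy0 : ∀ i, 0 ≤ y i := fun i => le_trans hθ0.le (hUθ y hy i)
  -- positivity of all the hlen's
  have hxpos : ∀ j, 0 < hlen x (V j) := fun j => hlen_pos hθ0 (hUθ x hx) (hV1 j)
  have hypos : ∀ j, 0 < hlen y (V j) := fun j => hlen_pos hθ0 (hUθ y hy) (hV1 j)
  have hmpos : ∀ j, 0 < hlen m (V j) := fun j => hlen_pos hθ0 (hUθ m hmidU) (hV1 j)
  -- the termwise convexity inequality (real version)
  have hterm : ∀ j, f (hlen m (V j)) ≤ a * f (hlen x (V j)) + b * f (hlen y (V j)) := by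
    intro j
    have hcombo : 0 < a * hlen x (V j) + b * hlen y (V j) :=
      add_pos (mul_pos ha (hxpos j)) (mul_pos hb (hypos j))
    have h1 : a * hlen x (V j) + b * hlen y (V j) ≤ hlen m (V j) :=
      hlen_concave hx0 hy0 ha.le hb.le (V j)
    have step1 : f (hlen m (V j)) ≤ f (a * hlen x (V j) + b * hlen y (V j)) :=
      hf_anti.antitoneOn (Set.mem_Ioi.mpr hcombo) (Set.mem_Ioi.mpr (hmpos j)) h1
    have step2 : f (a * hlen x (V j) + b * hlen y (V j))
        ≤ a * f (hlen x (V j)) + b * f (hlen y (V j)) := by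
      have := hf_conv.convexOn.2 (Set.mem_Ioi.mpr (hxpos j)) (Set.mem_Ioi.mpr (hypos j))
        ha.le hb.le hab
      simpa [smul_eq_mul] using this
    exact step1.trans step2
  -- ENNReal termwise inequality
  have htermE : ∀ j, ENNReal.ofReal (f (hlen m (V j)))
      ≤ ENNReal.ofReal a * ENNReal.ofReal (f (hlen x (V j)))
        + ENNReal.ofReal b * ENNReal.ofReal (f (hlen y (V j))) := by
    intro j
    have h1 : 0 ≤ a * f (hlen x (V j)) := mul_nonneg ha.le (hf_pos _ (hxpos j)).le
    have h2 : 0 ≤ b * f (hlen y (V j)) := mul_nonneg hb.le (hf_pos _ (hypos j)).le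
    calc ENNReal.ofReal (f (hlen m (V j)))
        ≤ ENNReal.ofReal (a * f (hlen x (V j)) + b * f (hlen y (V j))) :=
          ENNReal.ofReal_le_ofReal (hterm j)
      _ = _ := by
          rw [ENNReal.ofReal_add h1 h2, ENNReal.ofReal_mul ha.le, ENNReal.ofReal_mul hb.le]
  -- the strict term
  obtain ⟨i, hi⟩ := Function.ne_iff.mp hxy
  obtain ⟨j0, hj0⟩ := hgen i
  have hmi : ∀ L, (∀ i', 0 ≤ L i') → hlen L (V j0) = L i := by
    intro L hL
    rw [hj0, hlen_mk_of hL]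
  have hstrict : ENNReal.ofReal (f (hlen m (V j0)))
      < ENNReal.ofReal a * ENNReal.ofReal (f (hlen x (V j0)))
        + ENNReal.ofReal b * ENNReal.ofReal (f (hlen y (V j0))) := by
    have hm0 : ∀ i', 0 ≤ m i' := fun i' => le_trans hθ0.le (hUθ m hmidU i')
    rw [hmi x hx0, hmi y hy0, hmi m hm0]
    have hmid : m i = a * x i + b * y i := by simp [hm]
    have hstr : f (m i) < a * f (x i) + b * f (y i) := by
      have := hf_conv.2 (Set.mem_Ioi.mpr (lt_of_lt_of_le hθ0 (hUθ x hx i)))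
        (Set.mem_Ioi.mpr (lt_of_lt_of_le hθ0 (hUθ y hy i))) hi ha hb hab
      simpa [smul_eq_mul, hmid] using this
    have h1 : 0 ≤ a * f (x i) := mul_nonneg ha.le (hf_pos _ (lt_of_lt_of_le hθ0 (hUθ x hx i))).le
    have h2 : 0 ≤ b * f (y i) := mul_nonneg hb.le (hf_pos _ (lt_of_lt_of_le hθ0 (hUθ y hy i))).le
    calc ENNReal.ofReal (f (m i))
        < ENNReal.ofReal (a * f (x i) + b * f (y i)) := by
          rw [ENNReal.ofReal_lt_ofReal_iff
            (add_pos (mul_pos ha (hf_pos _ (lt_of_lt_of_le hθ0 (hUθ x hx i))))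
              (mul_pos hb (hf_pos _ (lt_of_lt_of_le hθ0 (hUθ y hy i)))))]
          exact hstr
      _ = _ := by
          rw [ENNReal.ofReal_add h1 h2, ENNReal.ofReal_mul ha.le, ENNReal.ofReal_mul hb.le]
  -- sum up
  have hsum : (∑' j, ENNReal.ofReal (f (hlen m (V j))))
      < ENNReal.ofReal a * (∑' j, ENNReal.ofReal (f (hlen x (V j))))
        + ENNReal.ofReal b * (∑' j, ENNReal.ofReal (f (hlen y (V j)))) := by
    have := ENNReal.tsum_lt_tsum (hfin m hmidU) htermE hstrict
    calc (∑' j, ENNReal.ofReal (f (hlen m (V j))))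
        < ∑' j, (ENNReal.ofReal a * ENNReal.ofReal (f (hlen x (V j)))
            + ENNReal.ofReal b * ENNReal.ofReal (f (hlen y (V j)))) := this
      _ = _ := by rw [ENNReal.tsum_add, ENNReal.tsum_mul_left, ENNReal.tsum_mul_left]
  -- convert to toReal
  have hRHSne : ENNReal.ofReal a * (∑' j, ENNReal.ofReal (f (hlen x (V j))))
      + ENNReal.ofReal b * (∑' j, ENNReal.ofReal (f (hlen y (V j)))) ≠ ⊤ :=
    ENNReal.add_ne_top.mpr ⟨ENNReal.mul_ne_top ENNReal.ofReal_ne_top (hfin x hx),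
      ENNReal.mul_ne_top ENNReal.ofReal_ne_top (hfin y hy)⟩
  have h := (ENNReal.toReal_lt_toReal (ne_top_of_lt hsum) hRHSne).mpr hsum
  rw [ENNReal.toReal_add (ENNReal.mul_ne_top ENNReal.ofReal_ne_top (hfin x hx))
    (ENNReal.mul_ne_top ENNReal.ofReal_ne_top (hfin y hy)), ENNReal.toReal_mul,
    ENNReal.toReal_mul, ENNReal.toReal_ofReal ha.le, ENNReal.toReal_ofReal hb.le] at h
  simpa [smul_eq_mul] using h


lemma summable_ne_one (hk : 2 ≤ k) (f : ℝ → ℝ) (hf_pos : ∀ x > (0 : ℝ), 0 < f x)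
    (hf_anti : StrictAntiOn f (Set.Ioi 0))
    {θ σ X : ℝ} (hθ0 : 0 < θ) (hσ0 : 0 < σ)
    (hfσ : ∀ x : ℝ, X ≤ x → f x ≤ σ ^ x)
    (hr : (2 * (k : ℝ) - 1) * σ ^ θ < 1)
    {L : Fin k → ℝ} (hθL : ∀ i, θ ≤ L i) :
    Summable (fun c : {c : ConjClasses (FreeGroup (Fin k)) // c ≠ 1} => f (hlen L c.1)) := by
  have hbig := summable_over_FG hk f hf_pos hθ0 hσ0 hfσ hr
  set gfun : {c : ConjClasses (FreeGroup (Fin k)) // c ≠ 1} → {g : FreeGroup (Fin k) // g ≠ 1} :=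
    fun c => ⟨(minLen_spec c.1).choose, mk_ne_one (minLen_spec c.1).choose_spec.1 c.2⟩ with hgf
  have hinj : Function.Injective gfun := by
    intro c c' h
    have h1 : ConjClasses.mk (minLen_spec c.1).choose = c.1 := (minLen_spec c.1).choose_spec.1
    have h2 : ConjClasses.mk (minLen_spec c'.1).choose = c'.1 := (minLen_spec c'.1).choose_spec.1
    apply Subtype.ext
    rw [← h1, ← h2]
    exact congrArg (ConjClasses.mk ∘ Subtype.val) h
  have hcomp := hbig.comp_injective hinj
  apply Summable.of_nonneg_of_le (fun c => (hf_pos _ (hlen_pos hθ0 hθL c.2)).le) _ hcomp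
  intro c
  show f (hlen L c.1) ≤ f (θ * (FreeGroup.toWord (gfun c).1).length)
  have hlenc : (FreeGroup.toWord (gfun c).1).length = minLen c.1 :=
    (minLen_spec c.1).choose_spec.2
  rw [hlenc]
  have hml : (1 : ℝ) ≤ (minLen c.1 : ℝ) := by exact_mod_cast one_le_minLen c.2
  have h1 : 0 < θ * (minLen c.1 : ℝ) := mul_pos hθ0 (by linarith)
  exact hf_anti.antitoneOn (Set.mem_Ioi.mpr h1) (Set.mem_Ioi.mpr (hlen_pos hθ0 hθL c.2))
    (theta_minLen_le_hlen hθ0.le hθL c.1)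

/-- Theorem C: if `f` is positive, monotone decreasing, strictly convex on `(0,∞)` and
`limsup_{x→∞} f(x)^{1/x} < 1/(2k-1)^k`, then there is a convex neighborhood `U` of `ℒ*`
in `Δ_k` with `0 < P_f < C_f < ∞` on `U` on which both `C_f` and `P_f` are strictly
convex; in particular neither is constant on `U`. -/
theorem mcshane_stmt5 (k : ℕ) (hk : 2 ≤ k) (f : ℝ → ℝ)
    (hf_pos : ∀ x > (0:ℝ), 0 < f x)
    (hf_anti : StrictAntiOn f (Set.Ioi 0))
    (hf_conv : StrictConvexOn ℝ (Set.Ioi 0) f)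
    (hf_limsup : limsup (fun x : ℝ => f x ^ (1 / x)) atTop < 1 / (2 * (k:ℝ) - 1) ^ k) :
    ∃ U ⊆ simplex k, Convex ℝ U ∧ U ∈ 𝓝[simplex k] (Lstar k) ∧
      (∀ L ∈ U, 0 < Pf f L ∧ Pf f L < Cf f L ∧ Cf f L < ⊤) ∧
      StrictConvexOn ℝ U (fun L => (Cf f L).toReal) ∧
      StrictConvexOn ℝ U (fun L => (Pf f L).toReal) := by
  obtain ⟨θ, σ, X, hθ0, hθk, hσ0, hfσ, hr⟩ :=
    exists_sigma_theta k hk f hf_pos hf_anti hf_limsup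
  have hk0 : (0 : ℝ) < (k : ℝ) := by
    have : (2 : ℝ) ≤ (k : ℝ) := by exact_mod_cast hk
    linarith
  set U : Set (Fin k → ℝ) := {L | L ∈ simplex k ∧ ∀ i, θ < L i} with hUdef
  have hUsub : U ⊆ simplex k := fun L hL => hL.1
  -- convexity of U
  have hUconv : Convex ℝ U := by
    intro p hp q hq a b ha hb hab
    have key : ∀ i, θ < a * p i + b * q i := by
      intro i
      rcases eq_or_lt_of_le ha with rfl | ha'
      · have hb1 : b = 1 := by linarith
        simpa [hb1] using hq.2 i
      · have h1 : a * θ < a * p i := mul_lt_mul_of_pos_left (hp.2 i) ha'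
        have h2 : b * θ ≤ b * q i := mul_le_mul_of_nonneg_left (hq.2 i).le hb
        nlinarith
    refine ⟨⟨fun i => ?_, ?_⟩, fun i => ?_⟩
    · have := key i
      simp only [Pi.add_apply, Pi.smul_apply, smul_eq_mul]
      linarith
    · simp only [Pi.add_apply, Pi.smul_apply, smul_eq_mul]
      rw [Finset.sum_add_distrib, ← Finset.mul_sum, ← Finset.mul_sum, hp.1.2, hq.1.2]
      linarith
    · have := key i
      simp only [Pi.add_apply, Pi.smul_apply, smul_eq_mul]
      linarith
  -- U is a relative neighborhood of Lstar
  have hLstar_simplex : Lstar k ∈ simplex k := by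
    constructor
    · intro i
      show (0 : ℝ) < 1 / (k : ℝ)
      positivity
    · show ∑ _i : Fin k, (1 : ℝ) / (k : ℝ) = 1
      rw [Finset.sum_const, Finset.card_univ, Fintype.card_fin, nsmul_eq_mul]
      field_simp
  have hopen : IsOpen {L : Fin k → ℝ | ∀ i, θ < L i} := by
    rw [Set.setOf_forall]
    exact isOpen_iInter_of_finite fun i => isOpen_lt continuous_const (continuous_apply i)
  have hUnbhd : U ∈ 𝓝[simplex k] (Lstar k) := by
    rw [mem_nhdsWithin]
    refine ⟨{L : Fin k → ℝ | ∀ i, θ < L i}, hopen, fun i => hθk, ?_⟩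
    rintro L ⟨h1, h2⟩
    exact ⟨h2, h1⟩
  have i0 : Fin k := ⟨0, by omega⟩
  -- per-point facts
  have hθL : ∀ L ∈ U, ∀ i, θ ≤ L i := fun L hL i => (hL.2 i).le
  have hsum : ∀ L ∈ U, Summable
      (fun c : {c : ConjClasses (FreeGroup (Fin k)) // c ≠ 1} => f (hlen L c.1)) :=
    fun L hL => summable_ne_one hk f hf_pos hf_anti hθ0 hσ0 hfσ hr (hθL L hL)
  have hnn : ∀ L ∈ U, ∀ c : {c : ConjClasses (FreeGroup (Fin k)) // c ≠ 1},
      0 ≤ f (hlen L c.1) :=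
    fun L hL c => (hf_pos _ (hlen_pos hθ0 (hθL L hL) c.2)).le
  have hCf_eq : ∀ L ∈ U, Cf f L = ENNReal.ofReal
      (∑' c : {c : ConjClasses (FreeGroup (Fin k)) // c ≠ 1}, f (hlen L c.1)) := by
    intro L hL
    rw [Cf, ENNReal.ofReal_tsum_of_nonneg (hnn L hL) (hsum L hL)]
  have hCfin : ∀ L ∈ U, Cf f L ≠ ⊤ := by
    intro L hL
    rw [hCf_eq L hL]
    exact ENNReal.ofReal_ne_top
  -- the primitive set decomposition
  set P : Set (ConjClasses (FreeGroup (Fin k))) :=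
    {c | ∃ g, IsPrimitive g ∧ ConjClasses.mk g = c} with hPdef
  set NO : Set (ConjClasses (FreeGroup (Fin k))) := {c | c ≠ 1} with hNOdef
  have hPsub : P ⊆ NO := by
    rintro c ⟨g, hg, hmk⟩
    intro h1
    exact hg.ne_one (mk_eq_one_iff.mp (hmk.trans h1))
  have hmain : ∀ L ∈ U, 0 < Pf f L ∧ Pf f L < Cf f L ∧ Cf f L < ⊤ := by
    intro L hL
    set T : ConjClasses (FreeGroup (Fin k)) → ℝ≥0∞ :=
      fun c => ENNReal.ofReal (f (hlen L c)) with hTdef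
    have hPf_eq : Pf f L = ∑' c, P.indicator T c := by
      rw [Pf]
      exact tsum_subtype P T
    have hCf_ind : Cf f L = ∑' c, NO.indicator T c := by
      rw [Cf]
      exact tsum_subtype NO T
    have hpoint : ∀ c, P.indicator T c + (NO \ P).indicator T c = NO.indicator T c := by
      intro c
      by_cases h1 : c ∈ P
      · rw [Set.indicator_of_mem h1, Set.indicator_of_notMem (fun h => h.2 h1),
          Set.indicator_of_mem (hPsub h1), add_zero]
      · rw [Set.indicator_of_notMem h1, zero_add]
        by_cases h2 : c ∈ NO
        · rw [Set.indicator_of_mem (show c ∈ NO \ P from ⟨h2, h1⟩), Set.indicator_of_mem h2]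
        · rw [Set.indicator_of_notMem (fun h => h2 h.1), Set.indicator_of_notMem h2]
    have hdecomp : Cf f L = Pf f L + ∑' c, (NO \ P).indicator T c := by
      rw [hCf_ind, hPf_eq, ← ENNReal.tsum_add]
      exact tsum_congr fun c => (hpoint c).symm
    -- the non-primitive class of (of i0)^2
    set c2 : ConjClasses (FreeGroup (Fin k)) := ConjClasses.mk (FreeGroup.of i0 ^ 2) with hc2
    have hc2ne : c2 ≠ 1 := by
      rw [hc2, Ne, mk_eq_one_iff]
      exact sq_ne_one i0
    have hc2mem : c2 ∈ NO \ P := ⟨hc2ne, fun h => not_prim_conj_sq i0 h⟩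
    have hTc2pos : 0 < T c2 :=
      ENNReal.ofReal_pos.mpr (hf_pos _ (hlen_pos hθ0 (hθL L hL) hc2ne))
    have hRge : T c2 ≤ ∑' c, (NO \ P).indicator T c := by
      have := ENNReal.le_tsum (f := fun c => (NO \ P).indicator T c) c2
      rwa [Set.indicator_of_mem hc2mem] at this
    have hRne : (∑' c, (NO \ P).indicator T c) ≠ 0 := (lt_of_lt_of_le hTc2pos hRge).ne'
    have hPfne : Pf f L ≠ ⊤ := by
      intro h
      apply hCfin L hL
      rw [hdecomp, h, top_add]
    refine ⟨?_, ?_, ?_⟩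
    · -- 0 < Pf
      have hprim : ConjClasses.mk (FreeGroup.of i0) ∈ P := ⟨FreeGroup.of i0, isPrimitive_of i0, rfl⟩
      have h1 : T (ConjClasses.mk (FreeGroup.of i0)) ≤ Pf f L := by
        rw [hPf_eq]
        have := ENNReal.le_tsum (f := fun c => P.indicator T c) (ConjClasses.mk (FreeGroup.of i0))
        rwa [Set.indicator_of_mem hprim] at this
      exact lt_of_lt_of_le
        (ENNReal.ofReal_pos.mpr (hf_pos _ (hlen_pos hθ0 (hθL L hL) (mk_of_ne_one i0)))) h1
    · rw [hdecomp]
      exact ENNReal.lt_add_right hPfne hRne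
    · exact (hCfin L hL).lt_top
  refine ⟨U, hUsub, hUconv, hUnbhd, hmain, ?_, ?_⟩
  · -- strict convexity of Cf
    exact strictConvexOn_tsum f hf_pos hf_anti hf_conv hθ0 hUconv hθL
      (fun c : {c : ConjClasses (FreeGroup (Fin k)) // c ≠ 1} => c.1)
      (fun j => j.2) (fun L hL => hCfin L hL)
      (fun i => ⟨⟨ConjClasses.mk (FreeGroup.of i), mk_of_ne_one i⟩, rfl⟩)
  · -- strict convexity of Pf
    have hPfin : ∀ L ∈ U, Pf f L ≠ ⊤ := by
      intro L hL
      exact ne_top_of_lt (lt_trans (hmain L hL).2.1 (hmain L hL).2.2)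
    exact strictConvexOn_tsum f hf_pos hf_anti hf_conv hθ0 hUconv hθL
      (fun c : {c : ConjClasses (FreeGroup (Fin k)) //
        ∃ g, IsPrimitive g ∧ ConjClasses.mk g = c} => c.1)
      (fun j => by
        obtain ⟨g, hg, hmk⟩ := j.2
        intro h1
        exact hg.ne_one (mk_eq_one_iff.mp (hmk.trans h1)))
      (fun L hL => hPfin L hL)
      (fun i => ⟨⟨ConjClasses.mk (FreeGroup.of i), FreeGroup.of i, isPrimitive_of i, rfl⟩, rfl⟩)


end McShane
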